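/- For any p, q ∈ (0,1), the Kullback-Leibler divergence between the Bernoulli distributions with parameters p and q satisfies D_KL(p‖q) ≤ (e/2)·(ln(p/(1-p)) − ln(q/(1-q)))². -/

import Mathlib

noncomputable def klSigma (x : ℝ) : ℝ := Real.exp x / (1 + Real.exp x)
noncomputable def klL (x : ℝ) : ℝ := Real.log (1 + Real.exp x)

lemma one_add_exp_pos (x : ℝ) : (0:ℝ) < 1 + Real.exp x := by positivity

lemma hasDerivAt_klL (x : ℝ) : HasDerivAt klL (klSigma x) x := by
  have h1 : HasDerivAt (fun x => 1 + Real.exp x) (Real.exp x) x :=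
    (Real.hasDerivAt_exp x).const_add 1
  have h2 := (Real.hasDerivAt_log (ne_of_gt (one_add_exp_pos x))).comp x h1
  have h3 : klSigma x = (1 + Real.exp x)⁻¹ * Real.exp x := by unfold klSigma; rw [div_eq_inv_mul]
  rw [h3]; exact h2

lemma hasDerivAt_klSigma (x : ℝ) :
    HasDerivAt klSigma (Real.exp x / (1 + Real.exp x) ^ 2) x := by
  have h1 : HasDerivAt (fun x => 1 + Real.exp x) (Real.exp x) x :=
    (Real.hasDerivAt_exp x).const_add 1
  have h2 := (Real.hasDerivAt_exp x).div h1 (ne_of_gt (one_add_exp_pos x))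
  have h3 : Real.exp x / (1 + Real.exp x) ^ 2 = (Real.exp x * (1 + Real.exp x) - Real.exp x * Real.exp x) / (1 + Real.exp x) ^ 2 := by ring
  rw [h3]; exact h2

lemma klSigma_deriv_le (x : ℝ) : Real.exp x / (1 + Real.exp x) ^ 2 ≤ 1 / 4 := by
  have h := one_add_exp_pos x
  rw [div_le_iff₀ (by positivity)]
  nlinarith [sq_nonneg (1 - Real.exp x), Real.exp_pos x]

lemma klPhi_mono : Monotone (fun u : ℝ => u / 4 - klSigma u) := by
  have hd : ∀ u : ℝ, HasDerivAt (fun u : ℝ => u / 4 - klSigma u)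
      (1 / 4 - Real.exp u / (1 + Real.exp u) ^ 2) u := by
    intro u
    exact ((hasDerivAt_id u).div_const 4).sub (hasDerivAt_klSigma u)
  apply monotone_of_deriv_nonneg
  · exact fun u => (hd u).differentiableAt
  · intro u
    rw [(hd u).deriv]
    have := klSigma_deriv_le u
    linarith

lemma kl_key (t s : ℝ) :
    klL s - klL t - klSigma t * (s - t) ≤ (s - t) ^ 2 / 8 := by
  set g : ℝ → ℝ := fun u => klL u - klSigma t * u - (u - t) ^ 2 / 8 with hg
  have hgd : ∀ u : ℝ, HasDerivAt g (klSigma u - klSigma t - (u - t) / 4) u := by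
    intro u
    have h1 : HasDerivAt (fun u : ℝ => klSigma t * u) (klSigma t) u := by
      simpa using (hasDerivAt_id u).const_mul (klSigma t)
    have h2 : HasDerivAt (fun u : ℝ => (u - t) ^ 2 / 8) ((u - t) / 4) u := by
      have := (((hasDerivAt_id u).sub_const t).pow 2).div_const 8
      refine this.congr_deriv ?_
      rw [show (2:ℕ) - 1 = 1 from rfl]
      simp only [id, pow_one]
      ring
    exact ((hasDerivAt_klL u).sub h1).sub h2
  have hmain : g s ≤ g t := by
    rcases le_total t s with h | h
    · have hanti : AntitoneOn g (Set.Icc t s) := by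
        apply antitoneOn_of_deriv_nonpos (convex_Icc t s)
        · exact fun u _ => (hgd u).continuousAt.continuousWithinAt
        · exact fun u _ => ((hgd u).differentiableAt).differentiableWithinAt
        · intro u hu
          rw [(hgd u).deriv]
          rw [interior_Icc] at hu
          have := klPhi_mono (le_of_lt hu.1)
          simp only at this
          linarith
      exact hanti (Set.left_mem_Icc.2 h) (Set.right_mem_Icc.2 h) h
    · have hmono : MonotoneOn g (Set.Icc s t) := by
        apply monotoneOn_of_deriv_nonneg (convex_Icc s t)
        · exact fun u _ => (hgd u).continuousAt.continuousWithinAt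
        · exact fun u _ => ((hgd u).differentiableAt).differentiableWithinAt
        · intro u hu
          rw [(hgd u).deriv]
          rw [interior_Icc] at hu
          have := klPhi_mono (le_of_lt hu.2)
          simp only at this
          linarith
      exact hmono (Set.left_mem_Icc.2 h) (Set.right_mem_Icc.2 h) h
  simp only [hg] at hmain
  nlinarith [hmain]

lemma klSigma_logit {p : ℝ} (hp : p ∈ Set.Ioo (0:ℝ) 1) :
    klSigma (Real.log (p / (1 - p))) = p := by
  obtain ⟨h0, h1⟩ := hp
  have hp1 : (0:ℝ) < 1 - p := by linarith
  have he : Real.exp (Real.log (p / (1 - p))) = p / (1 - p) :=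
    Real.exp_log (by positivity)
  unfold klSigma
  rw [he]
  field_simp
  ring

lemma klL_logit {p : ℝ} (hp : p ∈ Set.Ioo (0:ℝ) 1) :
    klL (Real.log (p / (1 - p))) = -Real.log (1 - p) := by
  obtain ⟨h0, h1⟩ := hp
  have hp1 : (0:ℝ) < 1 - p := by linarith
  have he : Real.exp (Real.log (p / (1 - p))) = p / (1 - p) :=
    Real.exp_log (by positivity)
  unfold klL
  rw [he]
  have : (1:ℝ) + p / (1 - p) = (1 - p)⁻¹ := by field_simp; ring
  rw [this, Real.log_inv]

theorem kl_bernoulli_le (p q : ℝ) (hp : p ∈ Set.Ioo (0:ℝ) 1) (hq : q ∈ Set.Ioo (0:ℝ) 1) :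
    p * Real.log (p / q) + (1 - p) * Real.log ((1 - p) / (1 - q)) ≤
      (Real.exp 1 / 2) * (Real.log (p / (1 - p)) - Real.log (q / (1 - q))) ^ 2 := by
  obtain ⟨hp0, hp1⟩ := hp
  obtain ⟨hq0, hq1⟩ := hq
  have hp1' : (0:ℝ) < 1 - p := by linarith
  have hq1' : (0:ℝ) < 1 - q := by linarith
  set t := Real.log (p / (1 - p)) with ht
  set s := Real.log (q / (1 - q)) with hs
  have hσ : klSigma t = p := klSigma_logit ⟨hp0, hp1⟩
  have hLt : klL t = -Real.log (1 - p) := klL_logit ⟨hp0, hp1⟩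
  have hLs : klL s = -Real.log (1 - q) := klL_logit ⟨hq0, hq1⟩
  have key := kl_key t s
  rw [hσ, hLt, hLs] at key
  have hteq : t = Real.log p - Real.log (1 - p) := Real.log_div (ne_of_gt hp0) (ne_of_gt hp1')
  have hseq : s = Real.log q - Real.log (1 - q) := Real.log_div (ne_of_gt hq0) (ne_of_gt hq1')
  have hl1 : Real.log (p / q) = Real.log p - Real.log q :=
    Real.log_div (ne_of_gt hp0) (ne_of_gt hq0)
  have hl2 : Real.log ((1 - p) / (1 - q)) = Real.log (1 - p) - Real.log (1 - q) :=
    Real.log_div (ne_of_gt hp1') (ne_of_gt hq1')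
  rw [hl1, hl2]
  have hKL : p * (Real.log p - Real.log q) + (1 - p) * (Real.log (1 - p) - Real.log (1 - q)) =
      -Real.log (1 - q) - -Real.log (1 - p) - p * (s - t) := by
    rw [hseq, hteq]; ring
  rw [hKL]
  have he : (2:ℝ) ≤ Real.exp 1 := by
    have := Real.add_one_le_exp (1:ℝ)
    linarith
  nlinarith [sq_nonneg (s - t), sq_nonneg (t - s), key]
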